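/- Let K : ℝ → ℝ and g : ℝ → ℝ be functions integrable on every compact subinterval of [1,∞), with K(τ) ≤ 1 and g(τ) ≥ 0 for all τ ≥ 1. Then for every t ≥ 1, ∫₁ᵗ (1 − K(τ)·exp(−∫_τ^t g(s) ds)) dτ ≤ ∫₁ᵗ (s − 1)·g(s) ds + ∫₁ᵗ (1 − K(τ)) dτ. -/

import Mathlib

open MeasureTheory intervalIntegral Real


theorem tri_fubini (g : ℝ → ℝ) (t : ℝ) (ht : 1 ≤ t)
    (hg1t : IntegrableOn g (Set.Icc 1 t)) :
    (∫ τ in (1:ℝ)..t, ∫ s in τ..t, g s) = ∫ s in (1:ℝ)..t, (s - 1) * g s := by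
  set ν := volume.restrict (Set.Ioc (1:ℝ) t) with hν
  haveI : IsFiniteMeasure ν := by
    constructor
    rw [hν, Measure.restrict_apply MeasurableSet.univ, Set.univ_inter, Real.volume_Ioc]
    exact ENNReal.ofReal_lt_top
  have hgν : Integrable g ν := hg1t.mono_set Set.Ioc_subset_Icc_self
  set F : ℝ → ℝ → ℝ := fun τ s => Set.indicator (Set.Ioi τ) g s with hF
  have huncurry : Function.uncurry F =
      Set.indicator {q : ℝ × ℝ | q.1 < q.2} (fun q => g q.2) := by
    funext p
    simp [hF, Function.uncurry, Set.indicator, Set.mem_Ioi]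
  have hFint : Integrable (Function.uncurry F) (ν.prod ν) := by
    rw [huncurry]
    have hbase : Integrable (fun q : ℝ × ℝ => g q.2) (ν.prod ν) := by
      refine (integrable_prod_iff hgν.aestronglyMeasurable.comp_snd).2 ⟨?_, ?_⟩
      · exact Filter.Eventually.of_forall fun _ => hgν
      · simp only []; exact integrable_const (∫ (y : ℝ), ‖g y‖ ∂ν)
    exact hbase.indicator (measurableSet_lt measurable_fst measurable_snd)
  have hswap := MeasureTheory.integral_integral_swap hFint
  have hL : (∫ τ, ∫ s, F τ s ∂ν ∂ν) = ∫ τ in (1:ℝ)..t, ∫ s in τ..t, g s := by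
    rw [intervalIntegral.integral_of_le ht, hν]
    refine setIntegral_congr_fun measurableSet_Ioc fun τ hτ => ?_
    have hset : Set.Ioi τ ∩ Set.Ioc 1 t = Set.Ioc τ t := by
      ext s
      simp only [Set.mem_inter_iff, Set.mem_Ioi, Set.mem_Ioc]
      constructor
      · rintro ⟨h1, _, h3⟩; exact ⟨h1, h3⟩
      · rintro ⟨h1, h2⟩; exact ⟨h1, lt_of_le_of_lt hτ.1.le h1, h2⟩
    rw [hF]
    simp only
    rw [MeasureTheory.integral_indicator measurableSet_Ioi, Measure.restrict_restrict measurableSet_Ioi,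
      hset, intervalIntegral.integral_of_le hτ.2]
  have hR : (∫ s, ∫ τ, F τ s ∂ν ∂ν) = ∫ s in (1:ℝ)..t, (s - 1) * g s := by
    rw [intervalIntegral.integral_of_le ht, hν]
    refine setIntegral_congr_fun measurableSet_Ioc fun s hs => ?_
    have hind : ∀ τ : ℝ, F τ s = Set.indicator (Set.Iio s) (fun _ => g s) τ := by
      intro τ
      simp [hF, Set.indicator, Set.mem_Ioi, Set.mem_Iio]
    simp only [hind]
    rw [integral_indicator_const _ measurableSet_Iio]
    have hset : Set.Iio s ∩ Set.Ioc 1 t = Set.Ioo 1 s := by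
      ext τ
      simp only [Set.mem_inter_iff, Set.mem_Iio, Set.mem_Ioc, Set.mem_Ioo]
      constructor
      · rintro ⟨h1, h2, _⟩; exact ⟨h2, h1⟩
      · rintro ⟨h1, h2⟩; exact ⟨h2, h1, h2.le.trans hs.2⟩
    rw [measureReal_def, Measure.restrict_apply measurableSet_Iio, hset, Real.volume_Ioo,
      ENNReal.toReal_ofReal (by linarith [hs.1])]
    simp [smul_eq_mul]
  rw [← hL, hswap, hR]

/-- the key upper bound in the proof of the finiteness of the
asphericity mass. -/
theorem asphericity_mass_upper_bound
    (K g : ℝ → ℝ)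
    (hKint : ∀ a b : ℝ, 1 ≤ a → a ≤ b → IntegrableOn K (Set.Icc a b))
    (hgint : ∀ a b : ℝ, 1 ≤ a → a ≤ b → IntegrableOn g (Set.Icc a b))
    (hK : ∀ τ : ℝ, 1 ≤ τ → K τ ≤ 1)
    (hg : ∀ τ : ℝ, 1 ≤ τ → 0 ≤ g τ) :
    ∀ t : ℝ, 1 ≤ t →
      (∫ τ in (1:ℝ)..t, (1 - K τ * Real.exp (-∫ s in τ..t, g s)))
        ≤ (∫ s in (1:ℝ)..t, (s - 1) * g s) + ∫ τ in (1:ℝ)..t, (1 - K τ) := by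
  intro t ht
  have huIcc : Set.uIcc (1:ℝ) t = Set.Icc 1 t := Set.uIcc_of_le ht
  have hg1t : IntegrableOn g (Set.Icc 1 t) := hgint 1 t le_rfl ht
  have hK1t : IntegrableOn K (Set.Icc 1 t) := hKint 1 t le_rfl ht
  have hKi : IntervalIntegrable K volume 1 t := by
    rw [intervalIntegrable_iff_integrableOn_Ioc_of_le ht]
    exact hK1t.mono_set Set.Ioc_subset_Icc_self
  set h : ℝ → ℝ := fun τ => ∫ s in τ..t, g s with hh
  have hcont : ContinuousOn h (Set.Icc 1 t) := by
    have := intervalIntegral.continuousOn_primitive_interval_left (μ := volume) (f := g)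
      (a := 1) (b := t) (by rw [huIcc]; exact hg1t)
    rwa [huIcc] at this
  have hhnn : ∀ τ ∈ Set.Icc (1:ℝ) t, 0 ≤ h τ := fun τ hτ =>
    intervalIntegral.integral_nonneg hτ.2 fun s hs => hg s (le_trans hτ.1 hs.1)
  -- pointwise bound
  have hpt : ∀ τ ∈ Set.Icc (1:ℝ) t,
      1 - K τ * Real.exp (-h τ) ≤ h τ + (1 - K τ) := by
    intro τ hτ
    have hx : 0 ≤ h τ := hhnn τ hτ
    have hE1 : Real.exp (-h τ) ≤ 1 := Real.exp_le_one_iff.mpr (neg_nonpos.mpr hx)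
    have hE0 : 0 < Real.exp (-h τ) := Real.exp_pos _
    have hexp : 1 - h τ ≤ Real.exp (-h τ) := by
      have := Real.add_one_le_exp (-h τ); linarith
    have hK' : K τ ≤ 1 := hK τ hτ.1
    nlinarith [mul_nonneg (sub_nonneg.mpr hK') (sub_nonneg.mpr hE1)]
  -- integrabilities
  have hexpcont : ContinuousOn (fun τ => Real.exp (-h τ)) (Set.uIcc (1:ℝ) t) := by
    rw [huIcc]; exact Real.continuous_exp.comp_continuousOn hcont.neg
  have hf1 : IntervalIntegrable (fun τ => 1 - K τ * Real.exp (-h τ)) volume 1 t :=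
    intervalIntegrable_const.sub (hKi.mul_continuousOn hexpcont)
  have hhi : IntervalIntegrable h volume 1 t := by
    apply ContinuousOn.intervalIntegrable; rwa [huIcc]
  have hKi' : IntervalIntegrable (fun τ => 1 - K τ) volume 1 t :=
    intervalIntegrable_const.sub hKi
  have hf2 : IntervalIntegrable (fun τ => h τ + (1 - K τ)) volume 1 t := hhi.add hKi'
  have hmono : (∫ τ in (1:ℝ)..t, (1 - K τ * Real.exp (-h τ)))
      ≤ ∫ τ in (1:ℝ)..t, (h τ + (1 - K τ)) :=
    intervalIntegral.integral_mono_on ht hf1 hf2 hpt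
  have hsplit : (∫ τ in (1:ℝ)..t, (h τ + (1 - K τ)))
      = (∫ τ in (1:ℝ)..t, h τ) + ∫ τ in (1:ℝ)..t, (1 - K τ) :=
    intervalIntegral.integral_add hhi hKi'
  have hfub : (∫ τ in (1:ℝ)..t, h τ) = ∫ s in (1:ℝ)..t, (s - 1) * g s :=
    tri_fubini g t ht hg1t
  calc (∫ τ in (1:ℝ)..t, (1 - K τ * Real.exp (-∫ s in τ..t, g s)))
      ≤ ∫ τ in (1:ℝ)..t, (h τ + (1 - K τ)) := hmono
    _ = (∫ s in (1:ℝ)..t, (s - 1) * g s) + ∫ τ in (1:ℝ)..t, (1 - K τ) := by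
        rw [hsplit, hfub]
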